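/- arXiv:2510.12035 — 4 statements merged into one kernel-verified Lean document; each statement's English description precedes it below -/
import Mathlib

section
/- Fix integers n ≥ 2 and 1 ≤ ℓ ≤ n−1. For a binary vector b of length n, define α_b : {1,…,n−1} → {−1,0,1} by α_b(c) = b_c − b_{c+1}. Then the map b ↦ α_b restricts to a bijection from the set of binary vectors of length n with exactly ℓ ones onto the set of functions α : {1,…,n−1} → {−1,0,1} satisfying all of: (i) α is not identically 0; (ii) the nonzero values of α, read in increasing order of the argument, alternate in sign; (iii) letting c_max be the largest c with α(c) ≠ 0, the sum ∑_{c=1}^{n−1} c · α(c) equals ℓ if α(c_max) = 1 and equals ℓ − n if α(c_max) = −1. (This is the edge-by-edge content of the bijection between valid strandings and binary labelings of sl_n web graphs: condition (ii)–(iii) is the validity condition on a weight-ℓ edge.) -/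
private lemma tele_aux (b : ℕ → ℤ) (m : ℕ) :
    ∑ c ∈ Finset.Icc 1 m, (c : ℤ) * (b c - b (c + 1)) =
      (∑ i ∈ Finset.Icc 1 m, b i) - (m : ℤ) * b (m + 1) := by
  induction m with
  | zero => simp
  | succ m ih =>
    rw [Finset.sum_Icc_succ_top (by omega : 1 ≤ m + 1),
        Finset.sum_Icc_succ_top (by omega : 1 ≤ m + 1), ih]
    push_cast; ring

private lemma card_sum_aux (b : ℕ → ℤ) (s : Finset ℕ) (hb : ∀ i, b i = 0 ∨ b i = 1) :
    ((s.filter (fun i => b i = 1)).card : ℤ) = ∑ i ∈ s, b i := by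
  rw [Finset.card_filter]
  push_cast
  refine Finset.sum_congr rfl fun i _ => ?_
  rcases hb i with h | h <;> simp [h]

private lemma eq_of_steps_aux (b : ℕ → ℤ) (a : ℕ) :
    ∀ j, a ≤ j → (∀ d, a ≤ d → d < j → b (d + 1) = b d) → b j = b a := by
  intro j hj
  induction j, hj using Nat.le_induction with
  | base => intro _; rfl
  | succ j hj ih =>
    intro h
    rw [h j hj (by omega)]
    exact ih fun d hd hdj => h d hd (by omega)

private lemma key_aux (n : ℕ) (hn : 1 ≤ n) (α : ℕ → ℤ) (v : ℤ)
    (hsupp : ∀ c, c ∉ Finset.Icc 1 (n - 1) → α c = 0)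
    (halt : ∀ c c', c < c' → α c ≠ 0 → α c' ≠ 0 →
      (∀ d, c < d → d < c' → α d = 0) → α c' = -α c)
    (cmax : ℕ) (hcm : α cmax = v) (hvne : v ≠ 0)
    (hcmax : ∀ c, cmax < c → α c = 0) :
    ∀ c, (∑ d ∈ Finset.Icc c (n - 1), α d = 0 ∧
            ∀ d, c ≤ d → α d ≠ 0 → (∀ e, c ≤ e → e < d → α e = 0) → α d = -v)
       ∨ (∑ d ∈ Finset.Icc c (n - 1), α d = v ∧
            ∀ d, c ≤ d → α d ≠ 0 → (∀ e, c ≤ e → e < d → α e = 0) → α d = v) := by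
  classical
  have Srec : ∀ c, ∑ d ∈ Finset.Icc c (n - 1), α d
      = α c + ∑ d ∈ Finset.Icc (c + 1) (n - 1), α d := by
    intro c
    by_cases hc : c ≤ n - 1
    · rw [← Finset.Ioc_insert_left hc, Finset.sum_insert (by simp)]
      rw [← Finset.Icc_add_one_left_eq_Ioc]
    · rw [Finset.Icc_eq_empty (by omega), Finset.Icc_eq_empty (by omega),
        hsupp c (by simp [Finset.mem_Icc]; omega)]
      simp
  have base : ∀ c, n ≤ c →
      (∑ d ∈ Finset.Icc c (n - 1), α d = 0 ∧
        ∀ d, c ≤ d → α d ≠ 0 → (∀ e, c ≤ e → e < d → α e = 0) → α d = -v)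
      ∨ (∑ d ∈ Finset.Icc c (n - 1), α d = v ∧
        ∀ d, c ≤ d → α d ≠ 0 → (∀ e, c ≤ e → e < d → α e = 0) → α d = v) := by
    intro c hc
    left
    constructor
    · rw [Finset.Icc_eq_empty (by omega)]; simp
    · intro d hd hne _
      exact absurd (hsupp d (by simp [Finset.mem_Icc]; omega)) hne
  have step : ∀ c,
      ((∑ d ∈ Finset.Icc (c + 1) (n - 1), α d = 0 ∧
        ∀ d, c + 1 ≤ d → α d ≠ 0 → (∀ e, c + 1 ≤ e → e < d → α e = 0) → α d = -v)
      ∨ (∑ d ∈ Finset.Icc (c + 1) (n - 1), α d = v ∧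
        ∀ d, c + 1 ≤ d → α d ≠ 0 → (∀ e, c + 1 ≤ e → e < d → α e = 0) → α d = v)) →
      ((∑ d ∈ Finset.Icc c (n - 1), α d = 0 ∧
        ∀ d, c ≤ d → α d ≠ 0 → (∀ e, c ≤ e → e < d → α e = 0) → α d = -v)
      ∨ (∑ d ∈ Finset.Icc c (n - 1), α d = v ∧
        ∀ d, c ≤ d → α d ≠ 0 → (∀ e, c ≤ e → e < d → α e = 0) → α d = v)) := by
    intro c ih
    by_cases hc : α c = 0
    · have hfirst : ∀ d, c ≤ d → α d ≠ 0 → (∀ e, c ≤ e → e < d → α e = 0) →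
          (c + 1 ≤ d ∧ ∀ e, c + 1 ≤ e → e < d → α e = 0) := by
        intro d hd hne hz
        have hdc : d ≠ c := fun h => hne (h ▸ hc)
        exact ⟨by omega, fun e he hed => hz e (by omega) hed⟩
      rcases ih with ⟨h1, h2⟩ | ⟨h1, h2⟩
      · left
        refine ⟨by rw [Srec c, hc, zero_add]; exact h1, fun d hd hne hz => ?_⟩
        exact h2 d (hfirst d hd hne hz).1 hne (hfirst d hd hne hz).2
      · right
        refine ⟨by rw [Srec c, hc, zero_add]; exact h1, fun d hd hne hz => ?_⟩
        exact h2 d (hfirst d hd hne hz).1 hne (hfirst d hd hne hz).2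
    · have hfirstc : ∀ d, c ≤ d → α d ≠ 0 → (∀ e, c ≤ e → e < d → α e = 0) →
          α d = α c := by
        intro d hd hne hz
        rcases eq_or_lt_of_le hd with h | h
        · rw [← h]
        · exact absurd (hz c le_rfl h) hc
      by_cases hex : ∃ d, c + 1 ≤ d ∧ α d ≠ 0
      · have hd0 := Nat.find_spec hex
        set d0 := Nat.find hex with hd0def
        have hz0 : ∀ e, c + 1 ≤ e → e < d0 → α e = 0 := by
          intro e he hed
          by_contra hne
          exact Nat.find_min hex hed ⟨he, hne⟩
        have hd0alt : α d0 = -α c :=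
          halt c d0 (by omega) hc hd0.2 (fun d h1 h2 => hz0 d (by omega) h2)
        rcases ih with ⟨h1, h2⟩ | ⟨h1, h2⟩
        · have hv0 : α d0 = -v := h2 d0 hd0.1 hd0.2 hz0
          have hcv : α c = v := by omega
          right
          refine ⟨by rw [Srec c, hcv, h1]; ring, fun d hd hne hz => ?_⟩
          rw [hfirstc d hd hne hz, hcv]
        · have hv0 : α d0 = v := h2 d0 hd0.1 hd0.2 hz0
          have hcv : α c = -v := by omega
          left
          refine ⟨by rw [Srec c, hcv, h1]; ring, fun d hd hne hz => ?_⟩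
          rw [hfirstc d hd hne hz, hcv]
      · push_neg at hex
        have hS1 : ∑ d ∈ Finset.Icc (c + 1) (n - 1), α d = 0 :=
          Finset.sum_eq_zero fun d hd => hex d (Finset.mem_Icc.mp hd).1
        have hccm : c = cmax := by
          rcases Nat.lt_trichotomy c cmax with h | h | h
          · exact absurd (hex cmax (by omega) ▸ hcm) (by rw [← hcm] at hvne; exact fun hh => hvne (hex cmax (by omega)))
          · exact h
          · exact absurd (hcmax c h) hc
        have hcv : α c = v := hccm ▸ hcm
        right
        refine ⟨by rw [Srec c, hcv, hS1]; ring, fun d hd hne hz => ?_⟩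
        rw [hfirstc d hd hne hz, hcv]
  have all : ∀ k c, n ≤ c + k →
      (∑ d ∈ Finset.Icc c (n - 1), α d = 0 ∧
        ∀ d, c ≤ d → α d ≠ 0 → (∀ e, c ≤ e → e < d → α e = 0) → α d = -v)
      ∨ (∑ d ∈ Finset.Icc c (n - 1), α d = v ∧
        ∀ d, c ≤ d → α d ≠ 0 → (∀ e, c ≤ e → e < d → α e = 0) → α d = v) := by
    intro k
    induction k with
    | zero => exact fun c h => base c (by omega)
    | succ k ih =>
      intro c h
      by_cases hc : n ≤ c
      · exact base c hc
      · exact step c (ih (c + 1) (by omega))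
  exact fun c => all n c (by omega)



/-- **Bijection between binary labelings and valid strandings of a single edge.**
Binary vectors `b` of length `n` (encoded as functions `ℕ → ℤ` taking values in `{0,1}`
on `{1,…,n}` and vanishing elsewhere) with exactly `ℓ` ones biject, via
`b ↦ (c ↦ b_c − b_{c+1})` (defined on `{1,…,n−1}`), with the functions
`α : {1,…,n−1} → {−1,0,1}` that are not identically zero, whose nonzero values
alternate in sign when read in increasing order of the argument, and for which
`∑_c c·α(c)` equals `ℓ` if `α(c_max) = 1` and `ℓ − n` if `α(c_max) = −1`. -/
theorem binary_labelings_biject_with_strandings (n ℓ : ℕ) (hn : 2 ≤ n)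
    (hl1 : 1 ≤ ℓ) (hl2 : ℓ ≤ n - 1) :
    Set.BijOn
      (fun (b : ℕ → ℤ) (c : ℕ) => if c ∈ Finset.Icc 1 (n - 1) then b c - b (c + 1) else 0)
      {b : ℕ → ℤ |
        (∀ i, b i = 0 ∨ b i = 1) ∧
        (∀ i, i ∉ Finset.Icc 1 n → b i = 0) ∧
        ((Finset.Icc 1 n).filter (fun i => b i = 1)).card = ℓ}
      {α : ℕ → ℤ |
        (∀ c, c ∉ Finset.Icc 1 (n - 1) → α c = 0) ∧
        (∀ c, α c = -1 ∨ α c = 0 ∨ α c = 1) ∧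
        (∃ c, α c ≠ 0) ∧
        (∀ c c', c < c' → α c ≠ 0 → α c' ≠ 0 →
          (∀ d, c < d → d < c' → α d = 0) → α c' = -α c) ∧
        (∀ cmax, α cmax ≠ 0 → (∀ c, cmax < c → α c = 0) →
          ∑ c ∈ Finset.Icc 1 (n - 1), (c : ℤ) * α c =
            if α cmax = 1 then (ℓ : ℤ) else (ℓ : ℤ) - n)} := by
  refine ⟨?_, ?_, ?_⟩
  ·
    rintro b ⟨hb01, hbsupp, hbcard⟩
    have hsum : (ℓ : ℤ) = ∑ i ∈ Finset.Icc 1 n, b i := by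
      rw [← card_sum_aux b _ hb01, hbcard]
    have hsplit : ∑ i ∈ Finset.Icc 1 n, b i = ∑ i ∈ Finset.Icc 1 (n - 1), b i + b n := by
      conv_lhs => rw [show n = (n - 1) + 1 by omega]
      rw [Finset.sum_Icc_succ_top (by omega : 1 ≤ n - 1 + 1), show n - 1 + 1 = n by omega]
    refine ⟨fun c hc => by simp [hc], ?_, ?_, ?_, ?_⟩
    · intro c
      simp only
      split_ifs with h
      · rcases hb01 c with h1 | h1 <;> rcases hb01 (c + 1) with h2 | h2 <;> omega
      · tauto
    · by_contra h
      push_neg at h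
      have hstep : ∀ d, 1 ≤ d → d < n → b (d + 1) = b d := by
        intro d hd1 hdn
        have hz : (if d ∈ Finset.Icc 1 (n - 1) then b d - b (d + 1) else 0) = 0 := h d
        rw [if_pos (Finset.mem_Icc.mpr ⟨by omega, by omega⟩)] at hz
        omega
      have hconst : ∀ i ∈ Finset.Icc 1 n, b i = b 1 := by
        intro i hi
        rw [Finset.mem_Icc] at hi
        exact eq_of_steps_aux b 1 i hi.1 fun d hd hdi => hstep d hd (by omega)
      rcases hb01 1 with h1 | h1
      · have : ((Finset.Icc 1 n).filter (fun i => b i = 1)).card = 0 := by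
          rw [Finset.card_eq_zero, Finset.filter_eq_empty_iff]
          intro i hi
          rw [hconst i hi, h1]
          norm_num
        omega
      · have : ((Finset.Icc 1 n).filter (fun i => b i = 1)).card = n := by
          rw [Finset.filter_true_of_mem (fun i hi => by rw [hconst i hi, h1]), Nat.card_Icc]
          omega
        omega
    · intro c c' hlt hc hc' hmid
      have hcm : c ∈ Finset.Icc 1 (n - 1) := by
        by_contra h; simp only [if_neg h] at hc; exact hc rfl
      have hcm' : c' ∈ Finset.Icc 1 (n - 1) := by
        by_contra h; simp only [if_neg h] at hc'; exact hc' rfl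
      rw [Finset.mem_Icc] at hcm hcm'
      simp only [if_pos (Finset.mem_Icc.mpr hcm), if_pos (Finset.mem_Icc.mpr hcm')] at hc hc' ⊢
      have hbeq : b c' = b (c + 1) := by
        refine eq_of_steps_aux b (c + 1) c' (by omega) fun d hd hdc => ?_
        have hz : (if d ∈ Finset.Icc 1 (n - 1) then b d - b (d + 1) else 0) = 0 :=
          hmid d (by omega) (by omega)
        rw [if_pos (Finset.mem_Icc.mpr ⟨by omega, by omega⟩)] at hz
        omega
      rcases hb01 c with h1 | h1 <;> rcases hb01 (c + 1) with h2 | h2 <;>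
        rcases hb01 (c' + 1) with h3 | h3 <;> omega
    · intro cmax hne hafter
      have hcm : cmax ∈ Finset.Icc 1 (n - 1) := by
        by_contra h; simp only [if_neg h] at hne; exact hne rfl
      rw [Finset.mem_Icc] at hcm
      simp only [if_pos (Finset.mem_Icc.mpr hcm)] at hne ⊢
      have hbn : b n = b (cmax + 1) := by
        refine eq_of_steps_aux b (cmax + 1) n (by omega) fun d hd hdn => ?_
        have hz : (if d ∈ Finset.Icc 1 (n - 1) then b d - b (d + 1) else 0) = 0 :=
          hafter d (by omega)
        rw [if_pos (Finset.mem_Icc.mpr ⟨by omega, by omega⟩)] at hz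
        omega
      have hLHS : ∑ c ∈ Finset.Icc 1 (n - 1), (c : ℤ) *
          (if c ∈ Finset.Icc 1 (n - 1) then b c - b (c + 1) else 0)
          = ∑ c ∈ Finset.Icc 1 (n - 1), (c : ℤ) * (b c - b (c + 1)) :=
        Finset.sum_congr rfl fun c hc => by rw [if_pos hc]
      rw [hLHS, tele_aux b (n - 1), show n - 1 + 1 = n by omega]
      have h1 : ∑ i ∈ Finset.Icc 1 (n - 1), b i = (ℓ : ℤ) - b n := by
        rw [hsplit] at hsum; omega
      rw [h1]
      rcases hb01 n with h0 | h0 <;> rcases hb01 cmax with h2 | h2 <;>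
          rcases hb01 (cmax + 1) with h3 | h3 <;> rw [h0] <;> split_ifs with hif <;>
          push_cast <;> try omega
  ·
    rintro b ⟨hb01, hbsupp, hbcard⟩ b' ⟨hb01', hbsupp', hbcard'⟩ heq
    have h := fun c => congrFun heq c
    have hdiff : ∀ d, 1 ≤ d → d < n →
        b (d + 1) - b' (d + 1) = b d - b' d := by
      intro d hd1 hdn
      have hz : (if d ∈ Finset.Icc 1 (n - 1) then b d - b (d + 1) else 0)
          = (if d ∈ Finset.Icc 1 (n - 1) then b' d - b' (d + 1) else 0) := h d
      rw [if_pos (Finset.mem_Icc.mpr ⟨by omega, by omega⟩),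
          if_pos (Finset.mem_Icc.mpr ⟨by omega, by omega⟩)] at hz
      omega
    have hconst : ∀ i ∈ Finset.Icc 1 n, b i - b' i = b 1 - b' 1 := by
      intro i hi
      rw [Finset.mem_Icc] at hi
      exact eq_of_steps_aux (fun i => b i - b' i) 1 i hi.1
        fun d hd hdi => hdiff d hd (by omega)
    have hsumeq : ∑ i ∈ Finset.Icc 1 n, (b i - b' i) = 0 := by
      rw [Finset.sum_sub_distrib, ← card_sum_aux b _ hb01, ← card_sum_aux b' _ hb01',
        hbcard, hbcard']
      ring
    have hsumconst : ∑ i ∈ Finset.Icc 1 n, (b i - b' i) = (n : ℤ) * (b 1 - b' 1) := by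
      rw [Finset.sum_congr rfl hconst, Finset.sum_const, Nat.card_Icc]
      simp [show n + 1 - 1 = n by omega]
    have hnz : b 1 - b' 1 = 0 := by
      rw [hsumconst] at hsumeq
      have : (n : ℤ) ≠ 0 := Int.natCast_ne_zero.mpr (by omega)
      exact (mul_eq_zero.mp hsumeq).resolve_left this
    funext i
    by_cases hi : i ∈ Finset.Icc 1 n
    · have := hconst i hi
      omega
    · rw [hbsupp i hi, hbsupp' i hi]
  ·
    classical
    rintro α ⟨hsupp, hval, ⟨c0, hc0⟩, halt, hsum⟩
    -- extract cmax
    set T : Finset ℕ := (Finset.Icc 1 (n - 1)).filter (fun c => α c ≠ 0) with hT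
    have hTne : T.Nonempty := by
      refine ⟨c0, Finset.mem_filter.mpr ⟨?_, hc0⟩⟩
      by_contra h
      exact hc0 (hsupp c0 h)
    set cmax := T.max' hTne with hcmaxdef
    have hcmaxmem := T.max'_mem hTne
    rw [Finset.mem_filter] at hcmaxmem
    have hcmne : α cmax ≠ 0 := hcmaxmem.2
    have hcmaxtop : ∀ c, cmax < c → α c = 0 := by
      intro c hc
      by_contra h
      have : c ∈ T := Finset.mem_filter.mpr ⟨by
        by_contra h2; exact h (hsupp c h2), h⟩
      exact absurd (T.le_max' c this) (by omega)
    set v := α cmax with hvdef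
    have hv : v = 1 ∨ v = -1 := by
      rcases hval cmax with h | h | h
      · right; rw [hvdef, h]
      · exact absurd h hcmne
      · left; rw [hvdef, h]
    have key := key_aux n (by omega) α v hsupp halt cmax rfl hcmne hcmaxtop
    set bn : ℤ := if v = 1 then 0 else 1 with hbndef
    set b : ℕ → ℤ := fun i =>
      if i ∈ Finset.Icc 1 n then bn + ∑ d ∈ Finset.Icc i (n - 1), α d else 0 with hbdef
    have hSmem : ∀ i, (∑ d ∈ Finset.Icc i (n - 1), α d) = 0 ∨
        (∑ d ∈ Finset.Icc i (n - 1), α d) = v := by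
      intro i
      rcases key i with ⟨h, _⟩ | ⟨h, _⟩
      · exact Or.inl h
      · exact Or.inr h
    have hb01 : ∀ i, b i = 0 ∨ b i = 1 := by
      intro i
      rw [hbdef]
      simp only
      split_ifs with hi
      · rcases hSmem i with h | h <;> rcases hv with h2 | h2 <;>
          rw [h] <;> norm_num [hbndef, h2]
      · exact Or.inl rfl
    have hbsupp : ∀ i, i ∉ Finset.Icc 1 n → b i = 0 := by
      intro i hi; rw [hbdef]; simp [hi]
    have hSn : (∑ d ∈ Finset.Icc n (n - 1), α d) = 0 := by
      rw [Finset.Icc_eq_empty (by omega)]; simp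
    have hbn : b n = bn := by
      show (if n ∈ Finset.Icc 1 n then bn + ∑ d ∈ Finset.Icc n (n - 1), α d else 0) = bn
      rw [if_pos (Finset.mem_Icc.mpr ⟨by omega, le_refl n⟩), hSn, add_zero]
    have hSrec : ∀ c, c ∈ Finset.Icc 1 (n - 1) →
        (∑ d ∈ Finset.Icc c (n - 1), α d) =
          α c + ∑ d ∈ Finset.Icc (c + 1) (n - 1), α d := by
      intro c hc
      rw [Finset.mem_Icc] at hc
      rw [← Finset.Ioc_insert_left hc.2, Finset.sum_insert (by simp), ← Finset.Icc_add_one_left_eq_Ioc]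
    have hstep : ∀ c ∈ Finset.Icc 1 (n - 1), b c - b (c + 1) = α c := by
      intro c hc
      have hc' := Finset.mem_Icc.mp hc
      rw [hbdef]
      simp only [if_pos (Finset.mem_Icc.mpr ⟨by omega, by omega⟩ : c ∈ Finset.Icc 1 n),
        if_pos (Finset.mem_Icc.mpr ⟨by omega, by omega⟩ : c + 1 ∈ Finset.Icc 1 n)]
      rw [hSrec c hc]
      ring
    have himg : (fun c => if c ∈ Finset.Icc 1 (n - 1) then b c - b (c + 1) else 0) = α := by
      funext c
      by_cases hc : c ∈ Finset.Icc 1 (n - 1)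
      · rw [if_pos hc, hstep c hc]
      · rw [if_neg hc, hsupp c hc]
    -- the sum of b over [1,n] is ℓ
    have hsumval : ∑ c ∈ Finset.Icc 1 (n - 1), (c : ℤ) * α c =
        if v = 1 then (ℓ : ℤ) else (ℓ : ℤ) - n := hsum cmax hcmne hcmaxtop
    have htele : ∑ c ∈ Finset.Icc 1 (n - 1), (c : ℤ) * α c =
        (∑ i ∈ Finset.Icc 1 (n - 1), b i) - ((n - 1 : ℕ) : ℤ) * b n := by
      have h := tele_aux b (n - 1)
      rw [show n - 1 + 1 = n by omega] at h
      rw [← h]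
      exact Finset.sum_congr rfl fun c hc => by rw [hstep c hc]
    have hsplit : ∑ i ∈ Finset.Icc 1 n, b i = ∑ i ∈ Finset.Icc 1 (n - 1), b i + b n := by
      conv_lhs => rw [show n = (n - 1) + 1 by omega]
      rw [Finset.sum_Icc_succ_top (by omega : 1 ≤ n - 1 + 1), show n - 1 + 1 = n by omega]
    have hbsum : ∑ i ∈ Finset.Icc 1 n, b i = (ℓ : ℤ) := by
      rw [hsplit]
      have h1 : ∑ i ∈ Finset.Icc 1 (n - 1), b i =
          (if v = 1 then (ℓ : ℤ) else (ℓ : ℤ) - n) + ((n - 1 : ℕ) : ℤ) * b n := by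
        rw [← hsumval, htele]; ring
      rw [h1, hbn]
      rcases hv with h2 | h2 <;> norm_num [hbndef, h2] <;> omega
    have hbcard : ((Finset.Icc 1 n).filter (fun i => b i = 1)).card = ℓ := by
      have := card_sum_aux b (Finset.Icc 1 n) hb01
      rw [hbsum] at this
      exact_mod_cast this
    exact ⟨b, ⟨hb01, hbsupp, hbcard⟩, himg⟩
end

section
/- Let ν ≥ 0 and 0 ≤ k ≤ ν, and let b1, b2 be binary vectors of length n whose symmetric difference vector b1Δb2 equals the word 1^k 0^{ν−k} (k ones followed by ν−k zeros). Then, as multisets, S_{b1−b2} = { (ν−2k+1) + 2t : 0 ≤ t ≤ k−1 } (k elements in arithmetic progression of step 2 ending at ν−1) and S_{b2−b1} = { (2k−ν+1) + 2t : 0 ≤ t ≤ ν−k−1 } (ν−k elements in arithmetic progression of step 2 ending at ν−1). Consequently, if k ≥ ν−k then S_{b1−b2} is the disjoint multiset union of S_{b2−b1} and {2k−ν+1−2j : 1 ≤ j ≤ 2k−ν}, and if ν−k ≥ k then S_{b2−b1} is the disjoint multiset union of S_{b1−b2} and {ν−2k+1−2j : 1 ≤ j ≤ ν−2k}. -/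
/-- `flex_{b1,b2}(i)` for binary vectors `b1, b2` of length `n`:
`#{j < i : (b1)_j = 1, (b2)_j = 0} − #{j < i : (b1)_j = 0, (b2)_j = 1}
 − #{j > i : (b1)_j = 1, (b2)_j = 0} + #{j > i : (b1)_j = 0, (b2)_j = 1}`,
where `j` ranges over `{1,…,n}`. -/
def flexp (n : ℕ) (b1 b2 : ℕ → ℤ) (i : ℕ) : ℤ :=
  (((Finset.Icc 1 n).filter (fun j => j < i ∧ b1 j = 1 ∧ b2 j = 0)).card : ℤ)
    - (((Finset.Icc 1 n).filter (fun j => j < i ∧ b1 j = 0 ∧ b2 j = 1)).card : ℤ)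
    - (((Finset.Icc 1 n).filter (fun j => i < j ∧ b1 j = 1 ∧ b2 j = 0)).card : ℤ)
    + (((Finset.Icc 1 n).filter (fun j => i < j ∧ b1 j = 0 ∧ b2 j = 1)).card : ℤ)

private lemma ms_eq {α : Type*} {s t : Multiset α} (hs : s.Nodup)
    (hsub : ∀ a ∈ s, a ∈ t) (hcard : Multiset.card t ≤ Multiset.card s) : s = t := by
  classical
  refine Multiset.eq_of_le_of_card_le ?_ hcard
  rw [Multiset.le_iff_count]
  intro a
  by_cases h : a ∈ s
  · rw [Multiset.count_eq_one_of_mem hs h]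
    exact Multiset.one_le_count_iff_mem.mpr (hsub a h)
  · simp [Multiset.count_eq_zero_of_notMem h]

/-- **Base case of the square-switch induction.**  Suppose the symmetric difference
vector of `b1, b2` is the word `1^k 0^{ν−k}` (i.e. the symmetric difference set has
`ν` elements, exactly `k` of which have `(b1)_i = 1`, and all of the latter precede
all indices with `(b1)_i = 0`).  Then the multisets
`S_{b1−b2} = {flex(i) : (b1)_i = 1, (b2)_i = 0}` and
`S_{b2−b1} = {flex(i) : (b1)_i = 0, (b2)_i = 1}` are the stated arithmetic
progressions of step `2` ending at `ν−1`, and consequently the larger one is the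
disjoint multiset union of the smaller with the stated multiset. -/
theorem square_switch_base_case (n ν k : ℕ) (hk : k ≤ ν) (b1 b2 : ℕ → ℤ)
    (hb1 : ∀ i ∈ Finset.Icc 1 n, b1 i = 0 ∨ b1 i = 1)
    (hb2 : ∀ i ∈ Finset.Icc 1 n, b2 i = 0 ∨ b2 i = 1)
    (hν : ((Finset.Icc 1 n).filter (fun i => b1 i ≠ b2 i)).card = ν)
    (hkcard : ((Finset.Icc 1 n).filter (fun i => b1 i = 1 ∧ b2 i = 0)).card = k)
    (hword : ∀ i ∈ Finset.Icc 1 n, ∀ j ∈ Finset.Icc 1 n,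
      b1 i = 1 → b2 i = 0 → b1 j = 0 → b2 j = 1 → i < j) :
    (((Finset.Icc 1 n).filter (fun i => b1 i = 1 ∧ b2 i = 0)).val.map (flexp n b1 b2)
        = (Finset.range k).val.map (fun t => (ν : ℤ) - 2 * k + 1 + 2 * t)) ∧
    (((Finset.Icc 1 n).filter (fun i => b1 i = 0 ∧ b2 i = 1)).val.map (flexp n b1 b2)
        = (Finset.range (ν - k)).val.map (fun t => 2 * (k : ℤ) - ν + 1 + 2 * t)) ∧
    (ν - k ≤ k →
      ((Finset.Icc 1 n).filter (fun i => b1 i = 1 ∧ b2 i = 0)).val.map (flexp n b1 b2)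
        = ((Finset.Icc 1 n).filter (fun i => b1 i = 0 ∧ b2 i = 1)).val.map (flexp n b1 b2)
          + (Finset.Icc 1 (2 * k - ν)).val.map (fun j => 2 * (k : ℤ) - ν + 1 - 2 * j)) ∧
    (k ≤ ν - k →
      ((Finset.Icc 1 n).filter (fun i => b1 i = 0 ∧ b2 i = 1)).val.map (flexp n b1 b2)
        = ((Finset.Icc 1 n).filter (fun i => b1 i = 1 ∧ b2 i = 0)).val.map (flexp n b1 b2)
          + (Finset.Icc 1 (ν - 2 * k)).val.map (fun j => (ν : ℤ) - 2 * k + 1 - 2 * j)) := by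
  classical
  have hbp : ∀ (m : Multiset ℕ), (do let a ← m; pure ((a : ℤ))) = m.map (fun a : ℕ => (a : ℤ)) := by
    intro m
    show m.bind (fun a => {(a : ℤ)}) = _
    exact Multiset.bind_singleton _ _
  simp only [hbp, Multiset.map_map, Function.comp_def]
  set A := (Finset.Icc 1 n).filter (fun i => b1 i = 1 ∧ b2 i = 0) with hAdef
  set B := (Finset.Icc 1 n).filter (fun i => b1 i = 0 ∧ b2 i = 1) with hBdef
  have hdisj : Disjoint A B := by
    rw [Finset.disjoint_left]
    intro a ha hb
    rw [hAdef, Finset.mem_filter] at ha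
    rw [hBdef, Finset.mem_filter] at hb
    have h1 := ha.2.1
    have h2 := hb.2.1
    omega
  have hUnion : (Finset.Icc 1 n).filter (fun i => b1 i ≠ b2 i) = A ∪ B := by
    ext a
    rw [Finset.mem_union, hAdef, hBdef]
    simp only [Finset.mem_filter]
    constructor
    · rintro ⟨ha, hne⟩
      rcases hb1 a ha with h1 | h1 <;> rcases hb2 a ha with h2 | h2
      · exact absurd (h1.trans h2.symm) hne
      · exact Or.inr ⟨ha, h1, h2⟩
      · exact Or.inl ⟨ha, h1, h2⟩
      · exact absurd (h1.trans h2.symm) hne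
    · rintro (⟨ha, h1, h2⟩ | ⟨ha, h1, h2⟩) <;> exact ⟨ha, by rw [h1, h2]; norm_num⟩
  have hBcard : k + B.card = ν := by
    have h := hν
    rw [hUnion, Finset.card_union_of_disjoint hdisj, hkcard] at h
    omega
  have hlt : ∀ i ∈ A, ∀ j ∈ B, i < j := by
    intro i hi j hj
    rw [hAdef, Finset.mem_filter] at hi
    rw [hBdef, Finset.mem_filter] at hj
    exact hword i hi.1 j hj.1 hi.2.1 hi.2.2 hj.2.1 hj.2.2
  have hRF1 : ∀ i : ℕ, (Finset.Icc 1 n).filter (fun j => j < i ∧ b1 j = 1 ∧ b2 j = 0)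
      = A.filter (fun j => j < i) := by
    intro i
    rw [hAdef, Finset.filter_filter]
    exact Finset.filter_congr (fun x _ => by tauto)
  have hRF2 : ∀ i : ℕ, (Finset.Icc 1 n).filter (fun j => j < i ∧ b1 j = 0 ∧ b2 j = 1)
      = B.filter (fun j => j < i) := by
    intro i
    rw [hBdef, Finset.filter_filter]
    exact Finset.filter_congr (fun x _ => by tauto)
  have hRF3 : ∀ i : ℕ, (Finset.Icc 1 n).filter (fun j => i < j ∧ b1 j = 1 ∧ b2 j = 0)
      = A.filter (fun j => i < j) := by
    intro i
    rw [hAdef, Finset.filter_filter]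
    exact Finset.filter_congr (fun x _ => by tauto)
  have hRF4 : ∀ i : ℕ, (Finset.Icc 1 n).filter (fun j => i < j ∧ b1 j = 0 ∧ b2 j = 1)
      = B.filter (fun j => i < j) := by
    intro i
    rw [hBdef, Finset.filter_filter]
    exact Finset.filter_congr (fun x _ => by tauto)
  have hsplit : ∀ (s : Finset ℕ), ∀ i ∈ s,
      (s.filter (fun j => j < i)).card + 1 + (s.filter (fun j => i < j)).card = s.card := by
    intro s i hi
    have h1 : s.filter (fun j => ¬ j < i) = insert i (s.filter (fun j => i < j)) := by
      ext a
      simp only [Finset.mem_filter, Finset.mem_insert, not_lt]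
      constructor
      · rintro ⟨haA, hle⟩
        rcases Nat.lt_or_ge i a with h | h
        · exact Or.inr ⟨haA, h⟩
        · exact Or.inl (by omega)
      · rintro (rfl | ⟨haA, h⟩)
        · exact ⟨hi, le_refl _⟩
        · exact ⟨haA, le_of_lt h⟩
    have h2 := Finset.card_filter_add_card_filter_not (s := s) (p := fun j => j < i)
    rw [h1, Finset.card_insert_of_notMem (by simp)] at h2
    omega
  have hflexA : ∀ i ∈ A, flexp n b1 b2 i
      = (ν : ℤ) - 2 * k + 1 + 2 * ((A.filter (fun j => j < i)).card : ℤ) := by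
    intro i hi
    have hs := hsplit A i hi
    rw [hkcard] at hs
    have hB2 : B.filter (fun j => j < i) = ∅ := by
      rw [Finset.filter_eq_empty_iff]
      intro j hj
      have := hlt i hi j hj
      omega
    have hB4 : B.filter (fun j => i < j) = B := by
      rw [Finset.filter_eq_self]
      intro j hj
      exact hlt i hi j hj
    unfold flexp
    rw [hRF1, hRF2, hRF3, hRF4, hB2, hB4]
    simp only [Finset.card_empty, Nat.cast_zero]
    omega
  have hflexB : ∀ j ∈ B, flexp n b1 b2 j
      = (ν : ℤ) - 1 - 2 * ((B.filter (fun x => x < j)).card : ℤ) := by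
    intro j hj
    have hs := hsplit B j hj
    have hA1 : A.filter (fun x => x < j) = A := by
      rw [Finset.filter_eq_self]
      intro i hi
      exact hlt i hi j hj
    have hA3 : A.filter (fun x => j < x) = ∅ := by
      rw [Finset.filter_eq_empty_iff]
      intro i hi
      have := hlt i hi j hj
      omega
    unfold flexp
    rw [hRF1, hRF2, hRF3, hRF4, hA1, hA3]
    simp only [Finset.card_empty, Nat.cast_zero]
    omega
  have hrank : ∀ (s : Finset ℕ), ∀ i ∈ s, ∀ i' ∈ s, i < i' →
      (s.filter (fun j => j < i)).card < (s.filter (fun j => j < i')).card := by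
    intro s i hi i' _ h
    apply Finset.card_lt_card
    have hsub : s.filter (fun j => j < i) ⊆ s.filter (fun j => j < i') := by
      intro a ha
      rw [Finset.mem_filter] at ha ⊢
      exact ⟨ha.1, lt_trans ha.2 h⟩
    rw [Finset.ssubset_iff_of_subset hsub]
    exact ⟨i, Finset.mem_filter.mpr ⟨hi, h⟩, by simp⟩
  have part1 : A.val.map (flexp n b1 b2)
      = (Finset.range k).val.map (fun t : ℕ => (ν : ℤ) - 2 * (k : ℤ) + 1 + 2 * (t : ℤ)) := by
    apply ms_eq
    · apply Multiset.Nodup.map_on _ A.nodup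
      intro x hx y hy hxy
      rw [Finset.mem_val] at hx hy
      rw [hflexA x hx, hflexA y hy] at hxy
      by_contra hne
      rcases Nat.lt_or_ge x y with h | h
      · have := hrank A x hx y hy h; omega
      · have hyx : y < x := by omega
        have := hrank A y hy x hx hyx; omega
    · intro a ha
      rw [Multiset.mem_map] at ha ⊢
      obtain ⟨i, hi, rfl⟩ := ha
      rw [Finset.mem_val] at hi
      refine ⟨(A.filter (fun j => j < i)).card, ?_, (hflexA i hi).symm⟩
      rw [Finset.mem_val, Finset.mem_range]
      have := hsplit A i hi
      omega
    · simp only [Multiset.card_map]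
      show (Finset.range k).card ≤ A.card
      rw [Finset.card_range, hkcard]
  have part2 : B.val.map (flexp n b1 b2)
      = (Finset.range (ν - k)).val.map (fun t : ℕ => 2 * (k : ℤ) - (ν : ℤ) + 1 + 2 * (t : ℤ)) := by
    apply ms_eq
    · apply Multiset.Nodup.map_on _ B.nodup
      intro x hx y hy hxy
      rw [Finset.mem_val] at hx hy
      rw [hflexB x hx, hflexB y hy] at hxy
      by_contra hne
      rcases Nat.lt_or_ge x y with h | h
      · have := hrank B x hx y hy h; omega
      · have hyx : y < x := by omega
        have := hrank B y hy x hx hyx; omega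
    · intro a ha
      rw [Multiset.mem_map] at ha ⊢
      obtain ⟨j, hj, rfl⟩ := ha
      rw [Finset.mem_val] at hj
      have hs := hsplit B j hj
      refine ⟨B.card - 1 - (B.filter (fun x => x < j)).card, ?_, ?_⟩
      · rw [Finset.mem_val, Finset.mem_range]
        omega
      · rw [hflexB j hj]
        omega
    · simp only [Multiset.card_map]
      show (Finset.range (ν - k)).card ≤ B.card
      rw [Finset.card_range]
      omega
  refine ⟨part1, part2, ?_, ?_⟩
  · intro hle
    rw [part1, part2]
    apply ms_eq
    · apply Multiset.Nodup.map_on _ (Finset.range k).nodup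
      intro x hx y hy hxy
      omega
    · intro a ha
      rw [Multiset.mem_map] at ha
      obtain ⟨t, ht, rfl⟩ := ha
      rw [Finset.mem_val, Finset.mem_range] at ht
      rw [Multiset.mem_add]
      rcases Nat.lt_or_ge t (2 * k - ν) with h | h
      · right
        rw [Multiset.mem_map]
        refine ⟨2 * k - ν - t, ?_, ?_⟩
        · rw [Finset.mem_val, Finset.mem_Icc]; omega
        · show 2 * (k : ℤ) - ν + 1 - 2 * (2 * k - ν - t : ℕ) = (ν : ℤ) - 2 * k + 1 + 2 * t
          omega
      · left
        rw [Multiset.mem_map]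
        refine ⟨t - (2 * k - ν), ?_, ?_⟩
        · rw [Finset.mem_val, Finset.mem_range]; omega
        · show 2 * (k : ℤ) - ν + 1 + 2 * (t - (2 * k - ν) : ℕ) = (ν : ℤ) - 2 * k + 1 + 2 * t
          omega
    · simp only [Multiset.card_add, Multiset.card_map]
      show (Finset.range (ν - k)).card + (Finset.Icc 1 (2 * k - ν)).card ≤ (Finset.range k).card
      rw [Finset.card_range, Finset.card_range, Nat.card_Icc]
      omega
  · intro hle
    rw [part1, part2]
    apply ms_eq
    · apply Multiset.Nodup.map_on _ (Finset.range (ν - k)).nodup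
      intro x hx y hy hxy
      omega
    · intro a ha
      rw [Multiset.mem_map] at ha
      obtain ⟨t, ht, rfl⟩ := ha
      rw [Finset.mem_val, Finset.mem_range] at ht
      rw [Multiset.mem_add]
      rcases Nat.lt_or_ge t (ν - 2 * k) with h | h
      · right
        rw [Multiset.mem_map]
        refine ⟨ν - 2 * k - t, ?_, ?_⟩
        · rw [Finset.mem_val, Finset.mem_Icc]; omega
        · show (ν : ℤ) - 2 * k + 1 - 2 * (ν - 2 * k - t : ℕ) = 2 * (k : ℤ) - ν + 1 + 2 * t
          omega
      · left
        rw [Multiset.mem_map]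
        refine ⟨t - (ν - 2 * k), ?_, ?_⟩
        · rw [Finset.mem_val, Finset.mem_range]; omega
        · show (ν : ℤ) - 2 * k + 1 + 2 * (t - (ν - 2 * k) : ℕ) = 2 * (k : ℤ) - ν + 1 + 2 * t
          omega
    · simp only [Multiset.card_add, Multiset.card_map]
      show (Finset.range k).card + (Finset.Icc 1 (ν - 2 * k)).card ≤ (Finset.range (ν - k)).card
      rw [Finset.card_range, Finset.card_range, Nat.card_Icc]
      omega
end

section
/- Let b1, b2 be any binary vectors of length n, let ν = |S_{b1Δb2}|, and let k and ν−k be the cardinalities of the multisets S_{b1−b2} and S_{b2−b1}, respectively. If k ≥ ν−k, then as multisets S_{b1−b2} = S_{b2−b1} ⊎ {2k−ν+1−2j : 1 ≤ j ≤ 2k−ν} (a disjoint multiset union). Symmetrically, if k ≤ ν−k, then S_{b2−b1} = S_{b1−b2} ⊎ {ν−2k+1−2j : 1 ≤ j ≤ ν−2k}. -/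
lemma coe_map_nat (s : Multiset ℕ) :
    (do let a ← s; pure ((a : ℤ)) : Multiset ℤ) = s.map Nat.cast := by
  simp only [bind, Multiset.pure_def, Multiset.bind_def, Multiset.bind_singleton]

def Emul (m : ℕ) : Multiset ℤ := (Finset.Icc 1 m).val.map (fun j => (m : ℤ) + 1 - 2 * j)

lemma range_succ_bot (n : ℕ) : Multiset.range (n+1) = 0 ::ₘ (Multiset.range n).map (·+1) := by
  rw [Multiset.range, List.range_succ_eq_map]
  simp [Multiset.range, Nat.succ_eq_add_one]

lemma Icc_val (m : ℕ) : (Finset.Icc 1 m).val = (Multiset.range m).map (·+1) := by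
  induction m with
  | zero => simp
  | succ m ih =>
    have h : Finset.Icc 1 (m+1) = insert (m+1) (Finset.Icc 1 m) := by
      ext x; simp [Finset.mem_Icc]; omega
    rw [h, Finset.insert_val_of_notMem (by simp), ih, Multiset.range_succ]
    simp

lemma Emul_range (m : ℕ) :
    Emul m = (Multiset.range m).map (fun j : ℕ => (m : ℤ) - 1 - 2 * (j : ℤ)) := by
  rw [Emul, coe_map_nat, Multiset.map_map, Icc_val, Multiset.map_map]
  apply Multiset.map_congr rfl
  intro x _
  simp
  ring

lemma Emul_zero : Emul 0 = 0 := by rw [Emul_range]; simp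

lemma Emul_succ_bot (m : ℕ) :
    Emul (m+1) = (m : ℤ) ::ₘ (Emul m).map (fun x => x - 1) := by
  rw [Emul_range, Emul_range, range_succ_bot, Multiset.map_cons, Multiset.map_map,
    Multiset.map_map]
  congr 1
  · push_cast; ring
  · apply Multiset.map_congr rfl
    intro x _
    simp
    ring

lemma Emul_succ_top (m : ℕ) :
    Emul (m+1) = (-(m : ℤ)) ::ₘ (Emul m).map (fun x => x + 1) := by
  rw [Emul_range, Emul_range, Multiset.range_succ, Multiset.map_cons, Multiset.map_map]
  congr 1
  · push_cast; ring
  · apply Multiset.map_congr rfl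
    intro x _
    simp
    ring

lemma Emul_map_add (m : ℕ) :
    (Emul (m+1)).map (fun x => x + 1) = ((m : ℤ) + 1) ::ₘ Emul m := by
  rw [Emul_succ_bot, Multiset.map_cons, Multiset.map_map]
  congr 1
  have h : Multiset.map ((fun x : ℤ => x + 1) ∘ fun x => x - 1) (Emul m)
      = Multiset.map id (Emul m) := Multiset.map_congr rfl (fun x _ => by simp)
  rw [h, Multiset.map_id]

lemma Emul_map_sub (m : ℕ) :
    (Emul (m+1)).map (fun x => x - 1) = (-(m : ℤ) - 1) ::ₘ Emul m := by
  rw [Emul_succ_top, Multiset.map_cons, Multiset.map_map]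
  congr 1
  have h : Multiset.map ((fun x : ℤ => x - 1) ∘ fun x => x + 1) (Emul m)
      = Multiset.map id (Emul m) := Multiset.map_congr rfl (fun x _ => by simp)
  rw [h, Multiset.map_id]

lemma Emul_one : Emul 1 = {(0 : ℤ)} := by
  rw [show (1:ℕ) = 0 + 1 from rfl, Emul_succ_bot, Emul_zero]
  rfl

lemma Icc_succ_insert (n : ℕ) : Finset.Icc 1 (n+1) = insert (n+1) (Finset.Icc 1 n) := by
  ext x; simp [Finset.mem_Icc]; omega

lemma card_filter_succ (n : ℕ) (P : ℕ → Prop) [DecidablePred P] :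
    ((Finset.Icc 1 (n+1)).filter P).card
      = ((Finset.Icc 1 n).filter P).card + (if P (n+1) then 1 else 0) := by
  rw [Icc_succ_insert, Finset.filter_insert]
  split_ifs with hP
  · rw [Finset.card_insert_of_notMem (by simp)]
  · simp

lemma flexp_succ (n : ℕ) (b1 b2 : ℕ → ℤ) (i : ℕ) (hi : i ≤ n) :
    flexp (n+1) b1 b2 i = flexp n b1 b2 i
      - (if b1 (n+1) = 1 ∧ b2 (n+1) = 0 then 1 else 0)
      + (if b1 (n+1) = 0 ∧ b2 (n+1) = 1 then 1 else 0) := by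
  unfold flexp
  rw [card_filter_succ, card_filter_succ, card_filter_succ, card_filter_succ]
  rw [if_neg (fun h => by omega : ¬(n+1 < i ∧ b1 (n+1) = 1 ∧ b2 (n+1) = 0)),
    if_neg (fun h => by omega : ¬(n+1 < i ∧ b1 (n+1) = 0 ∧ b2 (n+1) = 1))]
  have e1 : (i < n+1 ∧ b1 (n+1) = 1 ∧ b2 (n+1) = 0) ↔ (b1 (n+1) = 1 ∧ b2 (n+1) = 0) := by
    constructor
    · exact fun h => h.2
    · exact fun h => ⟨by omega, h⟩
  have e2 : (i < n+1 ∧ b1 (n+1) = 0 ∧ b2 (n+1) = 1) ↔ (b1 (n+1) = 0 ∧ b2 (n+1) = 1) := by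
    constructor
    · exact fun h => h.2
    · exact fun h => ⟨by omega, h⟩
  rw [if_congr e1 rfl rfl, if_congr e2 rfl rfl]
  split_ifs <;> push_cast <;> ring

lemma flexp_top (n : ℕ) (b1 b2 : ℕ → ℤ) :
    flexp (n+1) b1 b2 (n+1)
      = (((Finset.Icc 1 n).filter (fun j => b1 j = 1 ∧ b2 j = 0)).card : ℤ)
        - ((Finset.Icc 1 n).filter (fun j => b1 j = 0 ∧ b2 j = 1)).card := by
  unfold flexp
  have e1 : ∀ (P : ℕ → Prop) (_ : DecidablePred P),
      (Finset.Icc 1 (n+1)).filter (fun j => j < n+1 ∧ P j)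
        = (Finset.Icc 1 n).filter P := by
    intro P _
    ext x
    simp only [Finset.mem_filter, Finset.mem_Icc]
    constructor
    · rintro ⟨⟨h1, h2⟩, h3, h4⟩; exact ⟨⟨h1, by omega⟩, h4⟩
    · rintro ⟨⟨h1, h2⟩, h4⟩; exact ⟨⟨h1, by omega⟩, by omega, h4⟩
  have e2 : ∀ (P : ℕ → Prop) (_ : DecidablePred P),
      (Finset.Icc 1 (n+1)).filter (fun j => n+1 < j ∧ P j) = ∅ := by
    intro P _
    apply Finset.filter_eq_empty_iff.mpr
    intro x hx
    simp only [Finset.mem_Icc] at hx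
    rintro ⟨h, _⟩
    omega
  rw [e1 _ _, e1 _ _, e2 _ _, e2 _ _]
  simp

lemma key (b1 b2 : ℕ → ℤ) (n : ℕ) :
    (((Finset.Icc 1 n).filter (fun i => b1 i = 0 ∧ b2 i = 1)).card
        ≤ ((Finset.Icc 1 n).filter (fun i => b1 i = 1 ∧ b2 i = 0)).card →
      ((Finset.Icc 1 n).filter (fun i => b1 i = 1 ∧ b2 i = 0)).val.map (flexp n b1 b2)
        = ((Finset.Icc 1 n).filter (fun i => b1 i = 0 ∧ b2 i = 1)).val.map (flexp n b1 b2)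
          + Emul (((Finset.Icc 1 n).filter (fun i => b1 i = 1 ∧ b2 i = 0)).card
              - ((Finset.Icc 1 n).filter (fun i => b1 i = 0 ∧ b2 i = 1)).card))
    ∧ (((Finset.Icc 1 n).filter (fun i => b1 i = 1 ∧ b2 i = 0)).card
        ≤ ((Finset.Icc 1 n).filter (fun i => b1 i = 0 ∧ b2 i = 1)).card →
      ((Finset.Icc 1 n).filter (fun i => b1 i = 0 ∧ b2 i = 1)).val.map (flexp n b1 b2)
        = ((Finset.Icc 1 n).filter (fun i => b1 i = 1 ∧ b2 i = 0)).val.map (flexp n b1 b2)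
          + Emul (((Finset.Icc 1 n).filter (fun i => b1 i = 0 ∧ b2 i = 1)).card
              - ((Finset.Icc 1 n).filter (fun i => b1 i = 1 ∧ b2 i = 0)).card)) := by
  induction n with
  | zero => simp [Emul_zero]
  | succ n ih =>
    set A : Finset ℕ := (Finset.Icc 1 n).filter (fun i => b1 i = 1 ∧ b2 i = 0) with hA
    set B : Finset ℕ := (Finset.Icc 1 n).filter (fun i => b1 i = 0 ∧ b2 i = 1) with hB
    have hAle : ∀ i ∈ A.val, i ≤ n := by
      intro i hi
      rw [Finset.mem_val, hA, Finset.mem_filter, Finset.mem_Icc] at hi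
      exact hi.1.2
    have hBle : ∀ i ∈ B.val, i ≤ n := by
      intro i hi
      rw [Finset.mem_val, hB, Finset.mem_filter, Finset.mem_Icc] at hi
      exact hi.1.2
    have hAnm : (n+1) ∉ A := by
      rw [hA]; simp [Finset.mem_filter, Finset.mem_Icc]
    have hBnm : (n+1) ∉ B := by
      rw [hB]; simp [Finset.mem_filter, Finset.mem_Icc]
    have htop : flexp (n+1) b1 b2 (n+1) = (A.card : ℤ) - B.card := flexp_top n b1 b2
    by_cases cA : b1 (n+1) = 1 ∧ b2 (n+1) = 0
    · have cB : ¬ (b1 (n+1) = 0 ∧ b2 (n+1) = 1) := by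
        rintro ⟨h1, h2⟩
        rw [cA.2] at h2
        exact absurd h2 (by norm_num)
      have hAeq : (Finset.Icc 1 (n+1)).filter (fun i => b1 i = 1 ∧ b2 i = 0)
          = insert (n+1) A := by
        rw [Icc_succ_insert, Finset.filter_insert, if_pos cA, hA]
      have hBeq : (Finset.Icc 1 (n+1)).filter (fun i => b1 i = 0 ∧ b2 i = 1) = B := by
        rw [Icc_succ_insert, Finset.filter_insert, if_neg cB, hB]
      have hmapA : A.val.map (flexp (n+1) b1 b2)
          = (A.val.map (flexp n b1 b2)).map (fun x => x - 1) := by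
        rw [Multiset.map_map]
        apply Multiset.map_congr rfl
        intro i hi
        simp only [Function.comp_apply]
        rw [flexp_succ n b1 b2 i (hAle i hi), if_pos cA, if_neg cB]
        ring
      have hmapB : B.val.map (flexp (n+1) b1 b2)
          = (B.val.map (flexp n b1 b2)).map (fun x => x - 1) := by
        rw [Multiset.map_map]
        apply Multiset.map_congr rfl
        intro i hi
        simp only [Function.comp_apply]
        rw [flexp_succ n b1 b2 i (hBle i hi), if_pos cA, if_neg cB]
        ring
      rw [hAeq, hBeq, Finset.insert_val_of_notMem hAnm,
        Finset.card_insert_of_notMem hAnm, Multiset.map_cons, htop, hmapA, hmapB]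
      constructor
      · intro hle
        rcases Nat.lt_or_ge A.card B.card with hlt | hge
        · -- B.card = A.card + 1
          have hBc : B.card = A.card + 1 := by omega
          have h2 := ih.2 (by omega)
          rw [show B.card - A.card = 1 from by omega, Emul_one] at h2
          rw [show A.card + 1 - B.card = 0 from by omega, Emul_zero, add_zero,
            h2, Multiset.map_add, Multiset.map_singleton]
          rw [show (A.card : ℤ) - B.card = -1 from by omega,
            show ((0 : ℤ) - 1) = -1 from by ring,
            show ({-1} : Multiset ℤ) = (-1 : ℤ) ::ₘ 0 from rfl,
            Multiset.add_cons, add_zero]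
        · -- B.card ≤ A.card
          have h1 := ih.1 hge
          rw [show A.card + 1 - B.card = (A.card - B.card) + 1 from by omega,
            Emul_succ_bot, h1, Multiset.map_add, Multiset.add_cons,
            show ((A.card - B.card : ℕ) : ℤ) = (A.card : ℤ) - B.card from by omega]
      · intro hle
        have h2 := ih.2 (by omega)
        rw [show B.card - A.card = (B.card - (A.card + 1)) + 1 from by omega] at h2
        rw [h2, Multiset.map_add, Emul_map_sub, Multiset.add_cons, Multiset.cons_add,
          show (A.card : ℤ) - B.card = -((B.card - (A.card + 1) : ℕ) : ℤ) - 1 from by omega]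
    · by_cases cB : b1 (n+1) = 0 ∧ b2 (n+1) = 1
      · have hAeq : (Finset.Icc 1 (n+1)).filter (fun i => b1 i = 1 ∧ b2 i = 0) = A := by
          rw [Icc_succ_insert, Finset.filter_insert, if_neg cA, hA]
        have hBeq : (Finset.Icc 1 (n+1)).filter (fun i => b1 i = 0 ∧ b2 i = 1)
            = insert (n+1) B := by
          rw [Icc_succ_insert, Finset.filter_insert, if_pos cB, hB]
        have hmapA : A.val.map (flexp (n+1) b1 b2)
            = (A.val.map (flexp n b1 b2)).map (fun x => x + 1) := by
          rw [Multiset.map_map]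
          apply Multiset.map_congr rfl
          intro i hi
          simp only [Function.comp_apply]
          rw [flexp_succ n b1 b2 i (hAle i hi), if_neg cA, if_pos cB]
          ring
        have hmapB : B.val.map (flexp (n+1) b1 b2)
            = (B.val.map (flexp n b1 b2)).map (fun x => x + 1) := by
          rw [Multiset.map_map]
          apply Multiset.map_congr rfl
          intro i hi
          simp only [Function.comp_apply]
          rw [flexp_succ n b1 b2 i (hBle i hi), if_neg cA, if_pos cB]
          ring
        rw [hAeq, hBeq, Finset.insert_val_of_notMem hBnm,
          Finset.card_insert_of_notMem hBnm, Multiset.map_cons, htop, hmapA, hmapB]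
        constructor
        · intro hle
          have h1 := ih.1 (by omega)
          rw [show A.card - B.card = (A.card - (B.card + 1)) + 1 from by omega] at h1
          rw [h1, Multiset.map_add, Emul_map_add, Multiset.add_cons, Multiset.cons_add,
            show (A.card : ℤ) - B.card = ((A.card - (B.card + 1) : ℕ) : ℤ) + 1 from by omega]
        · intro hle
          rcases Nat.lt_or_ge B.card A.card with hlt | hge
          · -- A.card = B.card + 1
            have h1 := ih.1 (by omega)
            rw [show A.card - B.card = 1 from by omega, Emul_one] at h1
            rw [show B.card + 1 - A.card = 0 from by omega, Emul_zero, add_zero,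
              h1, Multiset.map_add, Multiset.map_singleton]
            rw [show (A.card : ℤ) - B.card = 1 from by omega,
              show ((0 : ℤ) + 1) = 1 from by ring,
              show ({1} : Multiset ℤ) = (1 : ℤ) ::ₘ 0 from rfl,
              Multiset.add_cons, add_zero]
          · -- A.card ≤ B.card
            have h2 := ih.2 hge
            rw [show B.card + 1 - A.card = (B.card - A.card) + 1 from by omega,
              Emul_succ_top, h2, Multiset.map_add, Multiset.add_cons,
              show (A.card : ℤ) - B.card = -((B.card - A.card : ℕ) : ℤ) from by omega]
      · have hAeq : (Finset.Icc 1 (n+1)).filter (fun i => b1 i = 1 ∧ b2 i = 0) = A := by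
          rw [Icc_succ_insert, Finset.filter_insert, if_neg cA, hA]
        have hBeq : (Finset.Icc 1 (n+1)).filter (fun i => b1 i = 0 ∧ b2 i = 1) = B := by
          rw [Icc_succ_insert, Finset.filter_insert, if_neg cB, hB]
        have hmapA : A.val.map (flexp (n+1) b1 b2) = A.val.map (flexp n b1 b2) := by
          apply Multiset.map_congr rfl
          intro i hi
          rw [flexp_succ n b1 b2 i (hAle i hi), if_neg cA, if_neg cB]
          ring
        have hmapB : B.val.map (flexp (n+1) b1 b2) = B.val.map (flexp n b1 b2) := by
          apply Multiset.map_congr rfl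
          intro i hi
          rw [flexp_succ n b1 b2 i (hBle i hi), if_neg cA, if_neg cB]
          ring
        rw [hAeq, hBeq, hmapA, hmapB]
        exact ih

/-- **Multiset decomposition of `flex`-values.**  For arbitrary binary vectors `b1, b2`
of length `n`, with `ν` the size of the symmetric difference set and `k` the size of
`S_{b1−b2}`: if `k ≥ ν−k` then, as multisets,
`S_{b1−b2} = S_{b2−b1} ⊎ {2k−ν+1−2j : 1 ≤ j ≤ 2k−ν}`, and symmetrically if
`k ≤ ν−k` then `S_{b2−b1} = S_{b1−b2} ⊎ {ν−2k+1−2j : 1 ≤ j ≤ ν−2k}`. -/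
theorem flex_multiset_decomposition (n ν k : ℕ) (b1 b2 : ℕ → ℤ)
    (hb1 : ∀ i ∈ Finset.Icc 1 n, b1 i = 0 ∨ b1 i = 1)
    (hb2 : ∀ i ∈ Finset.Icc 1 n, b2 i = 0 ∨ b2 i = 1)
    (hν : ((Finset.Icc 1 n).filter (fun i => b1 i ≠ b2 i)).card = ν)
    (hk : ((Finset.Icc 1 n).filter (fun i => b1 i = 1 ∧ b2 i = 0)).card = k) :
    (ν - k ≤ k →
      ((Finset.Icc 1 n).filter (fun i => b1 i = 1 ∧ b2 i = 0)).val.map (flexp n b1 b2)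
        = ((Finset.Icc 1 n).filter (fun i => b1 i = 0 ∧ b2 i = 1)).val.map (flexp n b1 b2)
          + (Finset.Icc 1 (2 * k - ν)).val.map (fun j => 2 * (k : ℤ) - ν + 1 - 2 * j)) ∧
    (k ≤ ν - k →
      ((Finset.Icc 1 n).filter (fun i => b1 i = 0 ∧ b2 i = 1)).val.map (flexp n b1 b2)
        = ((Finset.Icc 1 n).filter (fun i => b1 i = 1 ∧ b2 i = 0)).val.map (flexp n b1 b2)
          + (Finset.Icc 1 (ν - 2 * k)).val.map (fun j => (ν : ℤ) - 2 * k + 1 - 2 * j)) := by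
  set l : ℕ := ((Finset.Icc 1 n).filter (fun i => b1 i = 0 ∧ b2 i = 1)).card with hl
  have hdisj : Disjoint ((Finset.Icc 1 n).filter (fun i => b1 i = 1 ∧ b2 i = 0))
      ((Finset.Icc 1 n).filter (fun i => b1 i = 0 ∧ b2 i = 1)) := by
    rw [Finset.disjoint_left]
    intro a ha hb
    simp only [Finset.mem_filter] at ha hb
    have := ha.2.1
    have := hb.2.1
    omega
  have hfil : (Finset.Icc 1 n).filter (fun i => b1 i ≠ b2 i)
      = (Finset.Icc 1 n).filter
          (fun i => (b1 i = 1 ∧ b2 i = 0) ∨ (b1 i = 0 ∧ b2 i = 1)) := by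
    apply Finset.filter_congr
    intro i hi
    rcases hb1 i hi with h1 | h1 <;> rcases hb2 i hi with h2 | h2 <;>
      norm_num [h1, h2]
  have hνeq : ν = k + l := by
    rw [← hν, hfil, Finset.filter_or, Finset.card_union_of_disjoint hdisj, hk, hl]
  have hkey := key b1 b2 n
  rw [hk, ← hl] at hkey
  constructor
  · intro h
    have hlk : l ≤ k := by omega
    have hextra : (Finset.Icc 1 (2 * k - ν)).val.map (fun j => 2 * (k : ℤ) - ν + 1 - 2 * j)
        = Emul (k - l) := by
      rw [show 2 * k - ν = k - l from by omega, Emul, coe_map_nat,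
        Multiset.map_map, Multiset.map_map]
      apply Multiset.map_congr rfl
      intro x _
      simp only [Function.comp_apply]
      omega
    rw [hextra]
    exact hkey.1 hlk
  · intro h
    have hkl : k ≤ l := by omega
    have hextra : (Finset.Icc 1 (ν - 2 * k)).val.map (fun j => (ν : ℤ) - 2 * k + 1 - 2 * j)
        = Emul (l - k) := by
      rw [show ν - 2 * k = l - k from by omega, Emul, coe_map_nat,
        Multiset.map_map, Multiset.map_map]
      apply Multiset.map_congr rfl
      intro x _
      simp only [Function.comp_apply]
      omega
    rw [hextra]
    exact hkey.2 hkl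
end

section
/- For all integers m and s and every integer t ≥ 1, the identity [s−t]_q · [m−1 choose t]_q + [m+s−t]_q · [m−1 choose t−1]_q = [s]_q · [m choose t]_q holds in ℚ(q), where the quantum binomials are defined by the product formula for arbitrary (possibly negative) integer tops. (This is the quantum-integer identity underlying the inductive step of the generalized square-switch relation.) -/
/-- The variable `q` of the field `ℚ(q)` of rational functions. -/
noncomputable def q : RatFunc ℚ := RatFunc.X

/-- The quantum integer `[m]_q = (q^m − q^{−m})/(q − q^{−1})`. -/
noncomputable def qint (m : ℤ) : RatFunc ℚ :=
  (q ^ m - q ^ (-m)) / (q - q⁻¹)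

/-- The quantum binomial `[m choose t]_q = ∏_{j=1}^{t} [m−t+j]_q / [j]_q`, defined for
arbitrary (possibly negative) integer tops. -/
noncomputable def qbinom (m : ℤ) (t : ℕ) : RatFunc ℚ :=
  ∏ j ∈ Finset.range t, qint (m - t + (j + 1)) / qint (j + 1)

lemma q_ne_zero : q ≠ 0 := RatFunc.X_ne_zero

lemma q_pow_ne_one {n : ℕ} (hn : n ≠ 0) : q ^ n ≠ 1 := by
  intro h
  rw [q, show (RatFunc.X : RatFunc ℚ) = algebraMap (Polynomial ℚ) _ Polynomial.X from
    (RatFunc.algebraMap_X).symm, ← map_pow, show (1 : RatFunc ℚ) = algebraMap (Polynomial ℚ) _ 1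
    from (map_one _).symm] at h
  have h2 := RatFunc.algebraMap_injective ℚ h
  have := congrArg Polynomial.natDegree h2
  simp [Polynomial.natDegree_X_pow] at this
  exact hn this

lemma q_zpow_ne_one {n : ℤ} (hn : n ≠ 0) : q ^ n ≠ 1 := by
  rcases n.lt_or_lt_of_ne hn with h | h
  · intro he
    have : q ^ (-n) = 1 := by
      rw [← inv_eq_one, ← zpow_neg, neg_neg, he]
    rw [show (-n) = ((-n).toNat : ℤ) by omega, zpow_natCast] at this
    exact q_pow_ne_one (by omega) this
  · intro he
    rw [show n = (n.toNat : ℤ) by omega, zpow_natCast] at he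
    exact q_pow_ne_one (by omega) he

lemma q_num_ne_zero {n : ℤ} (hn : n ≠ 0) : q ^ n - q ^ (-n) ≠ 0 := by
  rw [sub_ne_zero]
  intro h
  have : q ^ (n + n) = 1 := by
    rw [zpow_add₀ q_ne_zero]
    nth_rewrite 2 [h]
    rw [← zpow_add₀ q_ne_zero, add_neg_cancel, zpow_zero]
  exact q_zpow_ne_one (by omega) this

lemma q_denom_ne_zero : q - q⁻¹ ≠ 0 := by
  have h := q_num_ne_zero (n := 1) one_ne_zero
  rw [show ((1:ℤ)) = ((1:ℕ):ℤ) by norm_num, zpow_natCast, zpow_neg, zpow_natCast, pow_one] at h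
  exact h

lemma qint_ne_zero {n : ℤ} (hn : n ≠ 0) : qint n ≠ 0 :=
  div_ne_zero (q_num_ne_zero hn) q_denom_ne_zero

lemma qint_key (m s t : ℤ) :
    qint (s - t) * qint (m - t) + qint (m + s - t) * qint t = qint s * qint m := by
  have hq0 : q ≠ 0 := q_ne_zero
  have expand : ∀ a b : ℤ, qint a * qint b =
      ((q ^ a - q ^ (-a)) * (q ^ b - q ^ (-b))) / ((q - q⁻¹) * (q - q⁻¹)) := by
    intro a b; rw [qint, qint, div_mul_div_comm]
  rw [expand, expand, expand, ← add_div]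
  congr 1
  have htt : q ^ t * q ^ (-t) = 1 := by
    rw [← zpow_add₀ hq0, add_neg_cancel, zpow_zero]
  simp only [neg_sub, neg_add, neg_neg, sub_eq_add_neg, zpow_add₀ hq0]
  linear_combination (q ^ m * q ^ s + q ^ (-m) * q ^ (-s) - q ^ s * q ^ (-m)
    - q ^ m * q ^ (-s)) * htt

noncomputable def qD (n : ℕ) : RatFunc ℚ := ∏ j ∈ Finset.range n, qint (j + 1)

noncomputable def qN (m : ℤ) (n : ℕ) : RatFunc ℚ :=
  ∏ j ∈ Finset.range n, qint (m - n + (j + 1))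

lemma qD_ne_zero (n : ℕ) : qD n ≠ 0 :=
  Finset.prod_ne_zero_iff.mpr fun j _ => qint_ne_zero (by positivity)

lemma qbinom_mul_qD (m : ℤ) (n : ℕ) : qbinom m n * qD n = qN m n := by
  rw [qbinom, qD, qN, ← Finset.prod_mul_distrib]
  exact Finset.prod_congr rfl fun j _ => div_mul_cancel₀ _ (qint_ne_zero (by positivity))

lemma qD_succ (k : ℕ) : qD (k + 1) = qD k * qint (k + 1) := by
  rw [qD, Finset.prod_range_succ, qD]

lemma qN_succ_top (m : ℤ) (k : ℕ) : qN m (k + 1) = qN (m - 1) k * qint m := by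
  rw [qN, Finset.prod_range_succ, qN]
  congr 1
  · exact Finset.prod_congr rfl fun j _ => congrArg qint (by push_cast; ring)
  · exact congrArg qint (by push_cast; ring)

lemma qN_succ_bot (m : ℤ) (k : ℕ) :
    qN (m - 1) (k + 1) = qN (m - 1) k * qint (m - (k + 1)) := by
  rw [qN, Finset.prod_range_succ', qN]
  congr 1
  · exact Finset.prod_congr rfl fun j _ => congrArg qint (by push_cast; ring)
  · exact congrArg qint (by push_cast; ring)

/-- **Quantum-integer identity underlying the generalized square-switch relation.**
`[s−t]_q · [m−1 choose t]_q + [m+s−t]_q · [m−1 choose t−1]_q = [s]_q · [m choose t]_q`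
for all integers `m`, `s` and every integer `t ≥ 1`. -/
theorem qint_square_switch_identity (m s : ℤ) (t : ℕ) (ht : 1 ≤ t) :
    qint (s - t) * qbinom (m - 1) t + qint (m + s - t) * qbinom (m - 1) (t - 1)
      = qint s * qbinom m t := by
  obtain ⟨k, rfl⟩ : ∃ k, t = k + 1 := ⟨t - 1, by omega⟩
  have key := qint_key m s ((k : ℤ) + 1)
  have h1 := qbinom_mul_qD (m - 1) (k + 1)
  have h2 := qbinom_mul_qD (m - 1) k
  have h3 := qbinom_mul_qD m (k + 1)
  rw [qN_succ_bot] at h1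
  rw [qN_succ_top] at h3
  have hD := qD_succ k
  apply mul_right_cancel₀ (qD_ne_zero (k + 1))
  simp only [Nat.add_sub_cancel]
  push_cast at h1 h2 h3 hD key ⊢
  linear_combination qint (s - ((k : ℤ) + 1)) * h1
    + qint (m + s - ((k : ℤ) + 1)) * qint ((k : ℤ) + 1) * h2
    + qint (m + s - ((k : ℤ) + 1)) * qbinom (m - 1) k * hD
    - qint s * h3 + qN (m - 1) k * key
end
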